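/- Let A ⊂ X be a closed acceptance set and S = (S_0, S_T) a traded asset with strictly increasing pricing functional π: ℝ → ℝ satisfying π(0) = 0. Define ρ_{A,S,π}(X) = inf{π(λ) : λ ∈ ℝ, X + λ S_T ∈ A}. Then ρ_{A,S,π}(X) = π(ρ_{A,S}(X)/S_0) for all X, and ρ_{A,S,π} is quasiconvex if and only if A is convex. -/

import Mathlib

open Filter Topology

variable {X : Type*} [AddCommGroup X] [Module ℝ X] [PartialOrder X]
  [CovariantClass X X (· + ·) (· ≤ ·)] [PosSMulMono ℝ X]
  [TopologicalSpace X] [IsTopologicalAddGroup X] [ContinuousSMul ℝ X]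

/-- The risk measure `ρ_{A,S}(x) = inf {m : x + (m/S₀)·S_T ∈ A}`, valued in `EReal`
(with `inf ∅ = ⊤` and unbounded-below giving `⊥`). -/
noncomputable def rho (A : Set X) (S0 : ℝ) (ST : X) (x : X) : EReal :=
  sInf ((fun r : ℝ => (r : EReal)) '' {r : ℝ | x + (r / S0) • ST ∈ A})

/-- A set is monotone if it contains, with any element, every larger element. -/
def MonotoneSet (A : Set X) : Prop := ∀ x ∈ A, ∀ y, x ≤ y → y ∈ A

/-- An acceptance set: nonempty, proper, and monotone. -/
def AcceptanceSet (A : Set X) : Prop := A.Nonempty ∧ A ≠ Set.univ ∧ MonotoneSet A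

/-- The algebraic core (algebraic interior) of a set. -/
def algCore (A : Set X) : Set X :=
  {x | ∀ y : X, ∃ ε > 0, ∀ l : ℝ, |l| < ε → x + l • y ∈ A}

/-- The risk measure with nonlinear pricing functional π:
ρ_{A,S,π}(x) = inf {π(λ) : x + λ·S_T ∈ A}. -/
noncomputable def rhoPi (A : Set X) (π : ℝ → ℝ) (ST : X) (x : X) : EReal :=
  sInf ((fun l : ℝ => (π l : EReal)) '' {l : ℝ | x + l • ST ∈ A})

/-- The extension of π to EReal, with π(⊤) = ⊤ and π(⊥) = lim_{λ→-∞} π(λ). -/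
noncomputable def piExt (π : ℝ → ℝ) (e : EReal) : EReal :=
  if e = ⊤ then ⊤
  else if e = ⊥ then Filter.liminf (fun l : ℝ => ((π l : ℝ) : EReal)) Filter.atBot
  else ((π e.toReal : ℝ) : EReal)

/- ### Auxiliary lemmas -/

private lemma aux_L_closed (A : Set X) (hclosed : IsClosed A) (ST x : X) :
    IsClosed {l : ℝ | x + l • ST ∈ A} :=
  hclosed.preimage (continuous_const.add (continuous_id.smul continuous_const))

private lemma aux_L_upper (A : Set X) (hmono : MonotoneSet A) {ST : X} (hST : 0 ≤ ST)
    (x : X) {l l' : ℝ} (hl : x + l • ST ∈ A) (hle : l ≤ l') : x + l' • ST ∈ A := by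
  apply hmono _ hl
  have h1 : (0 : X) ≤ (l' - l) • ST := smul_nonneg (by linarith) hST
  calc x + l • ST = x + l • ST + 0 := (add_zero _).symm
    _ ≤ x + l • ST + (l' - l) • ST := add_le_add_right h1 _
    _ = x + l' • ST := by rw [add_assoc, ← add_smul]; ring_nf

private lemma aux_sInf_le_iff {S : Set EReal} {c : EReal} :
    sInf S ≤ c ↔ ∀ b, c < b → ∃ a ∈ S, a < b := by
  constructor
  · intro h b hb
    exact sInf_lt_iff.mp (lt_of_le_of_lt h hb)
  · intro h
    by_contra hc
    push_neg at hc
    obtain ⟨a, ha, hlt⟩ := h _ hc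
    exact absurd (sInf_le ha) (not_le.mpr hlt)

private lemma aux_sInf_coe_Ici (c : ℝ) :
    sInf ((fun r : ℝ => (r : EReal)) '' Set.Ici c) = (c : EReal) := by
  apply le_antisymm
  · exact sInf_le ⟨c, le_refl c, rfl⟩
  · apply le_sInf
    rintro _ ⟨r, hr, rfl⟩
    show (c : EReal) ≤ (r : EReal)
    exact_mod_cast hr

private lemma aux_liminf_atBot (f : ℝ → EReal) (hf : Monotone f) :
    liminf f atBot = sInf (Set.range f) := by
  apply le_antisymm
  · apply le_sInf
    rintro _ ⟨l, rfl⟩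
    exact liminf_le_of_frequently_le
      ((eventually_le_atBot l).mono fun l' h => hf h).frequently
  · exact le_liminf_of_le (by isBoundedDefault)
      (Eventually.of_forall fun l => sInf_le ⟨l, rfl⟩)

/-- Attainment: if the infimum of π over the acceptance ray is ≤ π l₀, then l₀
itself lies in the ray (using closedness and monotonicity). -/
private lemma aux_attain (A : Set X) (hclosed : IsClosed A) (hmono : MonotoneSet A)
    {ST : X} (hST : 0 ≤ ST) (π : ℝ → ℝ) (hπ : StrictMono π) (z : X) (l0 : ℝ)
    (h : sInf ((fun l : ℝ => (π l : EReal)) '' {l : ℝ | z + l • ST ∈ A}) ≤ (π l0 : EReal)) :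
    z + l0 • ST ∈ A := by
  by_contra hn
  have hsub : ∀ l, z + l • ST ∈ A → l0 < l := by
    intro l hl
    by_contra hle
    exact hn (aux_L_upper A hmono hST z hl (le_of_not_gt hle))
  have key : ∀ δ : ℝ, 0 < δ → ∃ l, (z + l • ST ∈ A) ∧ l < l0 + δ := by
    intro δ hδ
    by_contra hc
    push_neg at hc
    have hge : (↑(π (l0 + δ)) : EReal) ≤
        sInf ((fun l : ℝ => (π l : EReal)) '' {l : ℝ | z + l • ST ∈ A}) := by
      apply le_sInf
      rintro _ ⟨l, hl, rfl⟩
      show ((π (l0 + δ) : ℝ) : EReal) ≤ ((π l : ℝ) : EReal)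
      exact_mod_cast hπ.monotone (hc l hl)
    have : (↑(π (l0 + δ)) : EReal) ≤ (↑(π l0) : EReal) := hge.trans h
    have h2 : π (l0 + δ) ≤ π l0 := by exact_mod_cast this
    have := (hπ.le_iff_le).mp h2
    linarith
  have hcl : l0 ∈ closure {l : ℝ | z + l • ST ∈ A} := by
    rw [Metric.mem_closure_iff]
    intro ε hε
    obtain ⟨l, hlA, hlt⟩ := key ε hε
    refine ⟨l, hlA, ?_⟩
    have := hsub l hlA
    rw [Real.dist_eq, abs_lt]
    constructor <;> linarith
  exact hn ((aux_L_closed A hclosed ST z).closure_subset hcl)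

/-- for a closed acceptance set and a strictly increasing pricing
functional π with π(0) = 0 and π(1) = S₀, one has
ρ_{A,S,π}(x) = π(ρ_{A,S}(x)/S₀) for all x, and ρ_{A,S,π} is quasiconvex iff A is
convex. -/
theorem rhoPi_eq_and_quasiconvex_iff_convex (A : Set X) (S0 : ℝ) (ST : X)
    (hA : AcceptanceSet A) (hclosed : IsClosed A)
    (hS0 : 0 < S0) (hST : 0 ≤ ST) (hSTne : ST ≠ 0)
    (π : ℝ → ℝ) (hπ : StrictMono π) (hπ0 : π 0 = 0) (hπ1 : π 1 = S0) :
    (∀ x : X, rhoPi A π ST x = piExt (fun m : ℝ => π (m / S0)) (rho A S0 ST x)) ∧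
    ((∀ c : EReal, Convex ℝ {x : X | rhoPi A π ST x ≤ c}) ↔ Convex ℝ A) := by
  obtain ⟨hAne, hAprop, hmono⟩ := hA
  constructor
  · -- Part 1: the value formula
    intro x
    by_cases hne : {l : ℝ | x + l • ST ∈ A}.Nonempty
    · by_cases hbdd : BddBelow {l : ℝ | x + l • ST ∈ A}
      · -- bounded below, nonempty: L = [a, ∞)
        set a := sInf {l : ℝ | x + l • ST ∈ A} with ha_def
        have haL : x + a • ST ∈ A :=
          (aux_L_closed A hclosed ST x).csInf_mem hne hbdd
        have hL : {l : ℝ | x + l • ST ∈ A} = Set.Ici a := by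
          ext l
          constructor
          · exact fun hl => csInf_le hbdd hl
          · exact fun hl => aux_L_upper A hmono hST x haL hl
        have hR : {r : ℝ | x + (r / S0) • ST ∈ A} = Set.Ici (a * S0) := by
          ext r
          have : (x + (r / S0) • ST ∈ A) ↔ r / S0 ∈ Set.Ici a := by
            rw [← hL]; rfl
          rw [Set.mem_setOf_eq, this, Set.mem_Ici, Set.mem_Ici,
            le_div_iff₀ hS0]
        have hrho : rho A S0 ST x = ((a * S0 : ℝ) : EReal) := by
          rw [rho, hR, aux_sInf_coe_Ici]
        rw [hrho, piExt, if_neg (EReal.coe_ne_top _), if_neg (EReal.coe_ne_bot _),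
          EReal.toReal_coe, mul_div_cancel_right₀ a (ne_of_gt hS0)]
        rw [rhoPi, hL]
        apply le_antisymm
        · exact sInf_le ⟨a, le_refl a, rfl⟩
        · apply le_sInf
          rintro _ ⟨l, hl, rfl⟩
          show ((π a : ℝ) : EReal) ≤ ((π l : ℝ) : EReal)
          exact_mod_cast hπ.monotone hl
      · -- unbounded below: L = univ
        have hL : {l : ℝ | x + l • ST ∈ A} = Set.univ := by
          apply Set.eq_univ_of_forall
          intro l
          obtain ⟨l', hl', hlt⟩ := not_bddBelow_iff.mp hbdd l
          exact aux_L_upper A hmono hST x hl' (le_of_lt hlt)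
        have hR : {r : ℝ | x + (r / S0) • ST ∈ A} = Set.univ := by
          apply Set.eq_univ_of_forall
          intro r
          have : r / S0 ∈ {l : ℝ | x + l • ST ∈ A} := by rw [hL]; trivial
          exact this
        have hrho : rho A S0 ST x = ⊥ := by
          rw [rho, hR, Set.image_univ]
          rw [sInf_eq_bot]
          intro b hb
          obtain ⟨c, hc1, hc2⟩ := exists_between hb
          have hcT : c ≠ ⊤ := ne_top_of_lt hc2
          have hcB : c ≠ ⊥ := ne_of_gt hc1
          refine ⟨(c.toReal : EReal), ⟨c.toReal, rfl⟩, ?_⟩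
          rw [EReal.coe_toReal hcT hcB]
          exact hc2
        rw [hrho, piExt, if_neg (by simp), if_pos rfl]
        rw [rhoPi, hL, Set.image_univ]
        rw [aux_liminf_atBot (fun l : ℝ => ((π (l / S0) : ℝ) : EReal))
          (fun m m' hm => by
            show ((π (m / S0) : ℝ) : EReal) ≤ ((π (m' / S0) : ℝ) : EReal)
            exact_mod_cast hπ.monotone ((div_le_div_iff_of_pos_right hS0).mpr hm))]
        congr 1
        ext e
        constructor
        · rintro ⟨l, rfl⟩
          refine ⟨l * S0, ?_⟩
          show ((π (l * S0 / S0) : ℝ) : EReal) = ((π l : ℝ) : EReal)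
          rw [mul_div_cancel_right₀ l (ne_of_gt hS0)]
        · rintro ⟨m, rfl⟩
          exact ⟨m / S0, rfl⟩
    · -- empty case
      have hL : {l : ℝ | x + l • ST ∈ A} = ∅ :=
        Set.not_nonempty_iff_eq_empty.mp hne
      have hR : {r : ℝ | x + (r / S0) • ST ∈ A} = ∅ := by
        apply Set.eq_empty_iff_forall_notMem.mpr
        intro r hr
        exact hne ⟨r / S0, hr⟩
      have hrho : rho A S0 ST x = ⊤ := by
        rw [rho, hR, Set.image_empty, sInf_empty]
      rw [hrho, piExt, if_pos rfl, rhoPi, hL, Set.image_empty, sInf_empty]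
  · -- Part 2: quasiconvexity iff convexity
    constructor
    · -- sublevel sets convex → A convex
      intro h x hx y hy t s ht hs hts
      have hx' : rhoPi A π ST x ≤ ((π 0 : ℝ) : EReal) :=
        sInf_le ⟨0, by simpa using hx, rfl⟩
      have hy' : rhoPi A π ST y ≤ ((π 0 : ℝ) : EReal) :=
        sInf_le ⟨0, by simpa using hy, rfl⟩
      have hz : rhoPi A π ST (t • x + s • y) ≤ ((π 0 : ℝ) : EReal) :=
        h ((π 0 : ℝ) : EReal) hx' hy' ht hs hts
      have := aux_attain A hclosed hmono hST π hπ (t • x + s • y) 0 hz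
      simpa using this
    · -- A convex → sublevel sets convex
      intro hconv c x hx y hy t s ht hs hts
      simp only [Set.mem_setOf_eq] at hx hy ⊢
      rw [rhoPi, aux_sInf_le_iff]
      intro b hb
      obtain ⟨_, ⟨lx, hlxA, rfl⟩, hlxb⟩ := sInf_lt_iff.mp (lt_of_le_of_lt hx hb)
      obtain ⟨_, ⟨ly, hlyA, rfl⟩, hlyb⟩ := sInf_lt_iff.mp (lt_of_le_of_lt hy hb)
      set ν := max lx ly with hν
      have hxA : x + ν • ST ∈ A := aux_L_upper A hmono hST x hlxA (le_max_left _ _)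
      have hyA : y + ν • ST ∈ A := aux_L_upper A hmono hST y hlyA (le_max_right _ _)
      have hzmem : t • x + s • y + ν • ST ∈ A := by
        have h1 : t • (ν • ST) + s • (ν • ST) = ν • ST := by
          rw [← add_smul, hts, one_smul]
        have h2 : t • (x + ν • ST) + s • (y + ν • ST) = t • x + s • y + ν • ST := by
          rw [smul_add, smul_add, add_add_add_comm, h1]
        rw [← h2]
        exact hconv hxA hyA ht hs hts
      refine ⟨((π ν : ℝ) : EReal), ⟨ν, hzmem, rfl⟩, ?_⟩
      rcases le_total lx ly with hc | hc
      · rw [hν, max_eq_right hc]; exact hlyb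
      · rw [hν, max_eq_left hc]; exact hlxb
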